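/- arXiv:1712.10239 — 7 statements merged into one kernel-verified Lean document; each statement's English description precedes it below -/
import Mathlib

section
/- For all complex numbers u and v, one has |Im[(u·log|u|² − v·log|v|²)·conj(u − v)]| ≤ 2|u − v|². -/
open Complex

lemma im_expand (u v : ℂ) (a b : ℝ) :
    ((u * (a : ℂ) - v * (b : ℂ)) * (starRingEnd ℂ) (u - v)).im
      = (u.im * v.re - u.re * v.im) * (b - a) := by
  simp [Complex.mul_im, Complex.mul_re, Complex.sub_re, Complex.sub_im,
    Complex.conj_re, Complex.conj_im]
  ring

lemma w_eq (u v : ℂ) : (u * (starRingEnd ℂ) (v - u)).im = u.im * v.re - u.re * v.im := by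
  simp [Complex.mul_im, Complex.sub_re, Complex.sub_im, Complex.conj_re, Complex.conj_im]
  ring

lemma key_est (u v : ℂ) (hu : u ≠ 0) (hv : v ≠ 0) (h : ‖u‖ ≤ ‖v‖) :
    |u.im * v.re - u.re * v.im| *
      |Real.log (‖v‖ ^ 2) - Real.log (‖u‖ ^ 2)|
      ≤ 2 * ‖u - v‖ ^ 2 := by
  set a := ‖u‖ with ha_def
  set b := ‖v‖ with hb_def
  have ha : 0 < a := norm_pos_iff.mpr hu
  have hb : 0 < b := norm_pos_iff.mpr hv
  set d := ‖u - v‖ with hd_def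
  have hd : 0 ≤ d := norm_nonneg _
  -- w bound
  have hw : |u.im * v.re - u.re * v.im| ≤ a * d := by
    rw [← w_eq u v]
    have h1 : |(u * (starRingEnd ℂ) (v - u)).im| ≤ ‖u * (starRingEnd ℂ) (v - u)‖ :=
      Complex.abs_im_le_norm _
    rw [norm_mul, Complex.norm_conj, norm_sub_rev v u] at h1
    exact h1
  -- log difference
  have hΔ0 : 0 ≤ Real.log (b ^ 2) - Real.log (a ^ 2) := by
    have : Real.log (a ^ 2) ≤ Real.log (b ^ 2) := by
      apply Real.log_le_log (by positivity)
      nlinarith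
    linarith
  have hΔ : Real.log (b ^ 2) - Real.log (a ^ 2) ≤ 2 * (b - a) / a := by
    have h1 : Real.log (b ^ 2) - Real.log (a ^ 2) = 2 * Real.log (b / a) := by
      rw [Real.log_pow, Real.log_pow, Real.log_div hb.ne' ha.ne']
      push_cast; ring
    have h2 : Real.log (b / a) ≤ b / a - 1 :=
      Real.log_le_sub_one_of_pos (div_pos hb ha)
    rw [h1]
    have : b / a - 1 = (b - a) / a := by field_simp
    rw [this] at h2
    calc 2 * Real.log (b / a) ≤ 2 * ((b - a) / a) := by linarith
      _ = 2 * (b - a) / a := by ring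
  have hba : b - a ≤ d := by
    have h1 := norm_add_le u (v - u)
    simp only [add_sub_cancel] at h1
    have h2 : ‖v - u‖ = d := norm_sub_rev v u
    linarith [h2 ▸ h1]
  have habs : |Real.log (b ^ 2) - Real.log (a ^ 2)| = Real.log (b ^ 2) - Real.log (a ^ 2) :=
    abs_of_nonneg hΔ0
  rw [habs]
  have step : |u.im * v.re - u.re * v.im| * (Real.log (b ^ 2) - Real.log (a ^ 2))
      ≤ (a * d) * (2 * (b - a) / a) :=
    mul_le_mul hw hΔ hΔ0 (by positivity)
  have heq : (a * d) * (2 * (b - a) / a) = 2 * d * (b - a) := by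
    field_simp
  nlinarith [step, heq, hba, hd, mul_le_mul_of_nonneg_left hba (by positivity : (0:ℝ) ≤ 2 * d)]

theorem log_nonlinearity_monotone_estimate (u v : ℂ) :
    |((u * (Real.log (‖u‖ ^ 2) : ℂ) - v * (Real.log (‖v‖ ^ 2) : ℂ)) *
        (starRingEnd ℂ) (u - v)).im| ≤ 2 * ‖u - v‖ ^ 2 := by
  rw [im_expand, abs_mul]
  by_cases hu : u = 0
  · subst hu; simp
  by_cases hv : v = 0
  · subst hv; simp
  rcases le_total ‖u‖ ‖v‖ with h | h
  · exact key_est u v hu hv h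
  · have := key_est v u hv hu h
    have hsym : ‖u - v‖ = ‖v - u‖ := norm_sub_rev u v
    calc |u.im * v.re - u.re * v.im| *
          |Real.log (‖v‖ ^ 2) - Real.log (‖u‖ ^ 2)|
        = |v.im * u.re - v.re * u.im| *
          |Real.log (‖u‖ ^ 2) - Real.log (‖v‖ ^ 2)| := by
          rw [abs_sub_comm (Real.log _)]
          congr 1
          rw [abs_sub_comm]
          ring_nf
      _ ≤ 2 * ‖v - u‖ ^ 2 := this
      _ = 2 * ‖u - v‖ ^ 2 := by rw [← hsym]
end

section
/- Let f : [0,∞) → ℝ be monotone nondecreasing with f(0) = 0, and extend f to the complex plane by setting F(z) = (z/|z|)·f(|z|) for z ≠ 0 and F(0) = 0. Then for all complex numbers z₁ and z₂, Re[(F(z₁) − F(z₂))·conj(z₁ − z₂)] ≥ 0. -/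
theorem damping_monotonicity (f : ℝ → ℝ) (hf : MonotoneOn f (Set.Ici 0)) (hf0 : f 0 = 0)
    (F : ℂ → ℂ) (hF : ∀ z : ℂ, z ≠ 0 → F z = (z / (‖z‖ : ℂ)) * (f ‖z‖ : ℂ))
    (hF0 : F 0 = 0) (z₁ z₂ : ℂ) :
    0 ≤ ((F z₁ - F z₂) * (starRingEnd ℂ) (z₁ - z₂)).re := by
  have hfnn : ∀ r : ℝ, 0 ≤ r → 0 ≤ f r := fun r hr =>
    hf0 ▸ hf (Set.mem_Ici.mpr le_rfl) (Set.mem_Ici.mpr hr) hr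
  have key : ∀ z : ℂ, z ≠ 0 → ∀ w : ℂ,
      (F z * (starRingEnd ℂ) w).re = f ‖z‖ / ‖z‖ * (z * (starRingEnd ℂ) w).re := by
    intro z hz w
    have habs : (‖z‖ : ℂ) ≠ 0 := by
      simpa using (norm_ne_zero_iff.mpr hz)
    have : F z * (starRingEnd ℂ) w
        = ((f ‖z‖ / ‖z‖ : ℝ) : ℂ) * (z * (starRingEnd ℂ) w) := by
      rw [hF z hz]
      push_cast
      field_simp
    rw [this, Complex.re_ofReal_mul]
  have self_nn : ∀ z : ℂ, 0 ≤ (F z * (starRingEnd ℂ) z).re := by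
    intro z
    rcases eq_or_ne z 0 with hz | hz
    · simp [hz, hF0]
    · rw [key z hz z, Complex.mul_conj]
      have : (Complex.normSq z : ℂ).re = Complex.normSq z := Complex.ofReal_re _
      rw [this]
      have h1 : 0 < ‖z‖ := norm_pos_iff.mpr hz
      have h2 : Complex.normSq z = ‖z‖ ^ 2 := (Complex.sq_norm z).symm
      rw [h2]
      have := hfnn ‖z‖ h1.le
      positivity
  rcases eq_or_ne z₁ 0 with h1 | h1
  · subst h1
    have : ((F 0 - F z₂) * (starRingEnd ℂ) (0 - z₂)) = F z₂ * (starRingEnd ℂ) z₂ := by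
      rw [hF0, zero_sub, zero_sub, map_neg]; ring
    rw [this]
    exact self_nn z₂
  rcases eq_or_ne z₂ 0 with h2 | h2
  · subst h2
    have : ((F z₁ - F 0) * (starRingEnd ℂ) (z₁ - 0)) = F z₁ * (starRingEnd ℂ) z₁ := by
      rw [hF0]; ring
    rw [this]
    exact self_nn z₁
  -- general case
  set r₁ := ‖z₁‖ with hr₁def
  set r₂ := ‖z₂‖ with hr₂def
  have hr₁ : 0 < r₁ := norm_pos_iff.mpr h1
  have hr₂ : 0 < r₂ := norm_pos_iff.mpr h2
  have expand : (F z₁ - F z₂) * (starRingEnd ℂ) (z₁ - z₂)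
      = F z₁ * (starRingEnd ℂ) z₁ - F z₁ * (starRingEnd ℂ) z₂
        - F z₂ * (starRingEnd ℂ) z₁ + F z₂ * (starRingEnd ℂ) z₂ := by
    rw [map_sub]; ring
  rw [expand]
  simp only [Complex.add_re, Complex.sub_re]
  rw [key z₁ h1 z₁, key z₁ h1 z₂, key z₂ h2 z₁, key z₂ h2 z₂]
  have hself₁ : (z₁ * (starRingEnd ℂ) z₁).re = r₁ ^ 2 := by
    rw [Complex.mul_conj, Complex.ofReal_re, ← Complex.sq_norm]
  have hself₂ : (z₂ * (starRingEnd ℂ) z₂).re = r₂ ^ 2 := by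
    rw [Complex.mul_conj, Complex.ofReal_re, ← Complex.sq_norm]
  have hsymm : (z₂ * (starRingEnd ℂ) z₁).re = (z₁ * (starRingEnd ℂ) z₂).re := by
    have : z₂ * (starRingEnd ℂ) z₁ = (starRingEnd ℂ) (z₁ * (starRingEnd ℂ) z₂) := by
      simp [map_mul, Complex.conj_conj, mul_comm]
    rw [this, Complex.conj_re]
  rw [hself₁, hself₂, hsymm]
  set a := (z₁ * (starRingEnd ℂ) z₂).re with hadef
  have ha : a ≤ r₁ * r₂ := by
    calc a ≤ ‖z₁ * (starRingEnd ℂ) z₂‖ := Complex.re_le_norm _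
    _ = r₁ * r₂ := by rw [norm_mul, Complex.norm_conj]
  have hg₁ : 0 ≤ f r₁ / r₁ := div_nonneg (hfnn r₁ hr₁.le) hr₁.le
  have hg₂ : 0 ≤ f r₂ / r₂ := div_nonneg (hfnn r₂ hr₂.le) hr₂.le
  have hmul₁ : f r₁ / r₁ * a ≤ f r₁ * r₂ := by
    calc f r₁ / r₁ * a ≤ f r₁ / r₁ * (r₁ * r₂) := mul_le_mul_of_nonneg_left ha hg₁
    _ = f r₁ * r₂ := by field_simp
  have hmul₂ : f r₂ / r₂ * a ≤ f r₂ * r₁ := by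
    calc f r₂ / r₂ * a ≤ f r₂ / r₂ * (r₁ * r₂) := mul_le_mul_of_nonneg_left ha hg₂
    _ = f r₂ * r₁ := by field_simp
  have hsq₁ : f r₁ / r₁ * r₁ ^ 2 = f r₁ * r₁ := by field_simp
  have hsq₂ : f r₂ / r₂ * r₂ ^ 2 = f r₂ * r₂ := by field_simp
  have hmono : 0 ≤ (f r₁ - f r₂) * (r₁ - r₂) := by
    rcases le_total r₁ r₂ with h | h
    · have := hf (Set.mem_Ici.mpr hr₁.le) (Set.mem_Ici.mpr hr₂.le) h
      nlinarith
    · have := hf (Set.mem_Ici.mpr hr₂.le) (Set.mem_Ici.mpr hr₁.le) h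
      nlinarith
  nlinarith [hmul₁, hmul₂, hsq₁, hsq₂, hmono]
end

section
/- Let f : [0,∞) → ℝ be monotone nondecreasing with f(0) = 0, and extend f to the complex plane by setting F(z) = (z/|z|)·f(|z|) for z ≠ 0 and F(0) = 0. Then for all nonzero complex numbers z₁ and z₂, Re[(F(z₁) − F(z₂))·conj(z₁ − z₂)] ≥ (f(|z₁|) − f(|z₂|))·(|z₁| − |z₂|). -/
theorem damping_monotonicity_key_inequality (f : ℝ → ℝ) (hf : MonotoneOn f (Set.Ici 0))
    (hf0 : f 0 = 0) (F : ℂ → ℂ)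
    (hF : ∀ z : ℂ, z ≠ 0 → F z = (z / (‖z‖ : ℂ)) * (f ‖z‖ : ℂ))
    (hF0 : F 0 = 0) (z₁ z₂ : ℂ) (hz₁ : z₁ ≠ 0) (hz₂ : z₂ ≠ 0) :
    (f ‖z₁‖ - f ‖z₂‖) * (‖z₁‖ - ‖z₂‖) ≤
      ((F z₁ - F z₂) * (starRingEnd ℂ) (z₁ - z₂)).re := by
  set r₁ := ‖z₁‖ with hr₁def
  set r₂ := ‖z₂‖ with hr₂def
  have hr₁ : 0 < r₁ := norm_pos_iff.mpr hz₁
  have hr₂ : 0 < r₂ := norm_pos_iff.mpr hz₂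
  have hf₁ : 0 ≤ f r₁ := hf0 ▸ hf (Set.mem_Ici.mpr (le_refl 0)) (Set.mem_Ici.mpr hr₁.le) hr₁.le
  have hf₂ : 0 ≤ f r₂ := hf0 ▸ hf (Set.mem_Ici.mpr (le_refl 0)) (Set.mem_Ici.mpr hr₂.le) hr₂.le
  have hsq₁ : z₁.re ^ 2 + z₁.im ^ 2 = r₁ ^ 2 := by
    rw [hr₁def, Complex.sq_norm, Complex.normSq_apply]; ring
  have hsq₂ : z₂.re ^ 2 + z₂.im ^ 2 = r₂ ^ 2 := by
    rw [hr₂def, Complex.sq_norm, Complex.normSq_apply]; ring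
  rw [hF z₁ hz₁, hF z₂ hz₂]
  simp only [Complex.sub_re, Complex.mul_re, Complex.mul_im, Complex.div_re, Complex.div_im,
    Complex.ofReal_re, Complex.ofReal_im, Complex.conj_re, Complex.conj_im, Complex.sub_im,
    Complex.normSq_apply, ← hr₁def, ← hr₂def]
  have key : z₁.re * z₂.re + z₁.im * z₂.im ≤ r₁ * r₂ := by
    nlinarith [sq_nonneg (z₁.re * z₂.im - z₁.im * z₂.re), sq_nonneg (z₁.re * z₂.re + z₁.im * z₂.im - r₁ * r₂), mul_pos hr₁ hr₂]
  have h₁ : (r₁ : ℝ) * r₁ + 0 * 0 = r₁ ^ 2 := by ring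
  field_simp
  nlinarith [mul_nonneg (mul_nonneg (mul_nonneg hr₁.le hr₂.le)
      (add_nonneg (mul_nonneg hf₁ hr₂.le) (mul_nonneg hf₂ hr₁.le))) (sub_nonneg.2 key),
    mul_pos hr₁ hr₂,
    mul_nonneg (mul_nonneg hr₁.le hf₁) (mul_nonneg hr₂.le hr₂.le),
    mul_nonneg (mul_nonneg (mul_nonneg hr₁.le hr₁.le) hr₂.le) hf₂]
end

section
/- Define the real function a on [0,∞) by a(0) = 0, a(x) = −x·log(x²) for 0 < x ≤ e^{−3}, and a(x) = 3x + 4e^{−3} − e^{−6}/x for x ≥ e^{−3}; extend it to the complex plane by A(z) = (z/|z|)·a(|z|) for z ≠ 0 and A(0) = 0. For each positive integer n define a_n : ℂ → ℂ by a_n(z) = A(z) if |z| ≥ 1/n and a_n(z) = n·a(1/n)·z if |z| ≤ 1/n. Then there exists a constant C > 0, independent of n, such that for all positive integers n and all complex numbers u and v, |Im[(a_n(u) − a_n(v))·conj(u − v)]| ≤ C·|u − v|². -/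
private lemma aux_small (a : ℝ → ℝ)
    (ha1 : ∀ x : ℝ, 0 < x → x ≤ Real.exp (-3) → a x = -x * Real.log (x ^ 2))
    (s r : ℝ) (hs : 0 < s) (hsr : s ≤ r) (hr : r ≤ Real.exp (-3)) :
    |a r / r - a s / s| ≤ 6 * (r - s) / s := by
  have hr0 : 0 < r := lt_of_lt_of_le hs hsr
  rw [ha1 r hr0 hr, ha1 s hs (hsr.trans hr)]
  have h1 : -r * Real.log (r ^ 2) / r = -(2 * Real.log r) := by
    rw [Real.log_pow]; field_simp; ring
  have h2 : -s * Real.log (s ^ 2) / s = -(2 * Real.log s) := by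
    rw [Real.log_pow]; field_simp; ring
  rw [h1, h2]
  have hlog : Real.log r - Real.log s = Real.log (r / s) := (Real.log_div hr0.ne' hs.ne').symm
  have hmono : Real.log s ≤ Real.log r := Real.log_le_log hs hsr
  have hub : Real.log (r / s) ≤ r / s - 1 := Real.log_le_sub_one_of_pos (by positivity)
  have heq : r / s - 1 = (r - s) / s := by field_simp
  have hY : 0 ≤ (r - s) / s := div_nonneg (by linarith) hs.le
  rw [abs_sub_comm, abs_of_nonneg (by linarith), mul_div_assoc]
  linarith [heq ▸ hub, hlog ▸ hub]

private lemma aux_large (a : ℝ → ℝ)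
    (ha2 : ∀ x : ℝ, Real.exp (-3) ≤ x → a x = 3 * x + 4 * Real.exp (-3) - Real.exp (-6) / x)
    (s r : ℝ) (hs : Real.exp (-3) ≤ s) (hsr : s ≤ r) :
    |a r / r - a s / s| ≤ 6 * (r - s) / s := by
  set E := Real.exp (-3) with hE
  have hE0 : 0 < E := Real.exp_pos _
  have hs0 : 0 < s := lt_of_lt_of_le hE0 hs
  have hr0 : 0 < r := lt_of_lt_of_le hs0 hsr
  have hE6 : Real.exp (-6) = E * E := by rw [hE, ← Real.exp_add]; norm_num
  have key : a r / r - a s / s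
      = (r - s) * (E * E * (r + s) - 4 * E * (r * s)) / (r ^ 2 * s ^ 2) := by
    rw [ha2 r (hs.trans hsr), ha2 s hs, hE6]
    field_simp
    ring
  have hEE : E * E ≤ s * s := mul_le_mul hs hs hE0.le hs0.le
  have h1 : E * E * (r + s) ≤ s * s * (r + s) :=
    mul_le_mul_of_nonneg_right hEE (by linarith)
  have h2 : s * s * (r + s) ≤ 2 * (r ^ 2 * s) := by
    nlinarith [mul_nonneg hs0.le (mul_nonneg (sub_nonneg.2 hsr) (sub_nonneg.2 hsr)),
      mul_nonneg (sub_nonneg.2 hsr) (mul_nonneg hs0.le hs0.le)]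
  have h3 : E * (r * s) ≤ s * (r * s) :=
    mul_le_mul_of_nonneg_right hs (mul_nonneg hr0.le hs0.le)
  have h4 : s * (r * s) ≤ r ^ 2 * s := by nlinarith
  have hM : |E * E * (r + s) - 4 * E * (r * s)| ≤ 6 * (r ^ 2 * s) := by
    rw [abs_le]
    constructor <;> nlinarith [mul_pos hE0 (mul_pos hr0 hs0),
      mul_pos hE0 (mul_pos hE0 (by linarith : (0:ℝ) < r + s))]
  rw [key, abs_div, abs_of_pos (show (0:ℝ) < r ^ 2 * s ^ 2 by positivity),
    div_le_div_iff₀ (by positivity) hs0, abs_mul,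
    abs_of_nonneg (by linarith : (0:ℝ) ≤ r - s)]
  calc (r - s) * |E * E * (r + s) - 4 * E * (r * s)| * s
      ≤ (r - s) * (6 * (r ^ 2 * s)) * s := by
        have := mul_le_mul_of_nonneg_left hM (by linarith : (0:ℝ) ≤ r - s)
        exact mul_le_mul_of_nonneg_right this hs0.le
    _ = 6 * (r - s) * (r ^ 2 * s ^ 2) := by ring

private lemma aux_scalar (a : ℝ → ℝ)
    (ha1 : ∀ x : ℝ, 0 < x → x ≤ Real.exp (-3) → a x = -x * Real.log (x ^ 2))
    (ha2 : ∀ x : ℝ, Real.exp (-3) ≤ x → a x = 3 * x + 4 * Real.exp (-3) - Real.exp (-6) / x)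
    (s r : ℝ) (hs : 0 < s) (hsr : s ≤ r) :
    |a r / r - a s / s| ≤ 6 * (r - s) / s := by
  set E := Real.exp (-3) with hE
  have hE0 : 0 < E := Real.exp_pos _
  by_cases hr : r ≤ E
  · exact aux_small a ha1 s r hs hsr hr
  by_cases hsE : E ≤ s
  · exact aux_large a ha2 s r hsE hsr
  push_neg at hr hsE
  have t1 : |a r / r - a E / E| ≤ 6 * (r - E) / E := aux_large a ha2 E r le_rfl hr.le
  have t2 : |a E / E - a s / s| ≤ 6 * (E - s) / s := aux_small a ha1 s E hs hsE.le le_rfl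
  have t3 : 6 * (r - E) / E ≤ 6 * (r - E) / s := by
    apply div_le_div_of_nonneg_left (by linarith) hs hsE.le
  calc |a r / r - a s / s| ≤ |a r / r - a E / E| + |a E / E - a s / s| := by
        have := abs_sub_le (a r / r) (a E / E) (a s / s)
        linarith
    _ ≤ 6 * (r - E) / s + 6 * (E - s) / s := by linarith
    _ = 6 * (r - s) / s := by field_simp; ring

private lemma aux_trunc (a : ℝ → ℝ)
    (ha1 : ∀ x : ℝ, 0 < x → x ≤ Real.exp (-3) → a x = -x * Real.log (x ^ 2))
    (ha2 : ∀ x : ℝ, Real.exp (-3) ≤ x → a x = 3 * x + 4 * Real.exp (-3) - Real.exp (-6) / x)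
    (c : ℝ) (hc : 0 < c) (s r : ℝ) (hs : 0 < s) (hsr : s ≤ r) :
    |(if r ≤ c then a c / c else a r / r) - (if s ≤ c then a c / c else a s / s)|
      ≤ 6 * (r - s) / s := by
  by_cases hrc : r ≤ c
  · rw [if_pos hrc, if_pos (hsr.trans hrc), sub_self, abs_zero]
    exact div_nonneg (by linarith) hs.le
  rw [if_neg hrc]
  push_neg at hrc
  by_cases hsc : s ≤ c
  · rw [if_pos hsc]
    have t1 : |a r / r - a c / c| ≤ 6 * (r - c) / c :=
      aux_scalar a ha1 ha2 c r hc hrc.le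
    have t2 : 6 * (r - c) / c ≤ 6 * (r - s) / s := by
      apply div_le_div₀ (by linarith) (by linarith) hs hsc
    linarith
  · rw [if_neg hsc]
    push_neg at hsc
    exact aux_scalar a ha1 ha2 s r hs hsr

private lemma aux_im_bound (u v : ℂ) :
    |(u * (starRingEnd ℂ) v).im| ≤ ‖u - v‖ * ‖v‖ := by
  have h : u * (starRingEnd ℂ) v = (u - v) * (starRingEnd ℂ) v + (v * (starRingEnd ℂ) v) := by
    ring
  have h2 : (v * (starRingEnd ℂ) v).im = 0 := by
    rw [Complex.mul_conj]; simp
  rw [h, Complex.add_im, h2, add_zero]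
  calc |((u - v) * (starRingEnd ℂ) v).im| ≤ ‖(u - v) * (starRingEnd ℂ) v‖ :=
        Complex.abs_im_le_norm _
    _ = ‖u - v‖ * ‖v‖ := by rw [norm_mul, Complex.norm_conj]

theorem truncated_a_monotone_estimate (a : ℝ → ℝ) (ha0 : a 0 = 0)
    (ha1 : ∀ x : ℝ, 0 < x → x ≤ Real.exp (-3) → a x = -x * Real.log (x ^ 2))
    (ha2 : ∀ x : ℝ, Real.exp (-3) ≤ x → a x = 3 * x + 4 * Real.exp (-3) - Real.exp (-6) / x)
    (A : ℂ → ℂ) (hA0 : A 0 = 0)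
    (hA : ∀ z : ℂ, z ≠ 0 → A z = (z / (‖z‖ : ℂ)) * (a (‖z‖) : ℂ))
    (an : ℕ → ℂ → ℂ)
    (han1 : ∀ (n : ℕ) (z : ℂ), 1 / (n : ℝ) ≤ ‖z‖ → an n z = A z)
    (han2 : ∀ (n : ℕ) (z : ℂ), ‖z‖ ≤ 1 / (n : ℝ) →
      an n z = ((n : ℂ) * (a (1 / (n : ℝ)) : ℂ)) * z) :
    ∃ C : ℝ, 0 < C ∧ ∀ (n : ℕ), 0 < n → ∀ u v : ℂ,
      |((an n u - an n v) * (starRingEnd ℂ) (u - v)).im| ≤ C * ‖u - v‖ ^ 2 := by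
  refine ⟨6, by norm_num, ?_⟩
  intro n hn
  have hn0 : (0:ℝ) < (n:ℝ) := by exact_mod_cast hn
  set c : ℝ := 1 / (n:ℝ) with hcdef
  have hc : 0 < c := by positivity
  set F : ℝ → ℝ := fun r => if r ≤ c then a c / c else a r / r with hFdef
  have hrep : ∀ z : ℂ, an n z = ((F (‖z‖) : ℝ) : ℂ) * z := by
    intro z
    by_cases h : ‖z‖ ≤ c
    · rw [han2 n z h]
      have : F (‖z‖) = a c / c := if_pos h
      rw [this]
      congr 1
      rw [hcdef]
      push_cast
      field_simp
    · push_neg at h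
      have hz0 : ‖z‖ ≠ 0 := ne_of_gt (lt_trans hc h)
      have hz : z ≠ 0 := by
        intro hzz; rw [hzz] at hz0; simp at hz0
      rw [han1 n z (le_of_lt h), hA z hz]
      have : F (‖z‖) = a (‖z‖) / ‖z‖ := if_neg (not_le.2 h)
      rw [this]
      have hz0' : ((‖z‖ : ℝ) : ℂ) ≠ 0 := by exact_mod_cast hz0
      push_cast
      field_simp
  -- the main estimate under the assumption |v| ≤ |u|
  have main : ∀ u v : ℂ, ‖v‖ ≤ ‖u‖ →
      |((an n u - an n v) * (starRingEnd ℂ) (u - v)).im| ≤ 6 * ‖u - v‖ ^ 2 := by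
    intro u v hvu
    rw [hrep u, hrep v]
    set p := F (‖u‖) with hp
    set q := F (‖v‖) with hq
    have him : (((p:ℂ) * u - (q:ℂ) * v) * (starRingEnd ℂ) (u - v)).im
        = (q - p) * (u * (starRingEnd ℂ) v).im := by
      simp [Complex.sub_im, Complex.sub_re, Complex.mul_im, Complex.mul_re,
        Complex.conj_re, Complex.conj_im, Complex.ofReal_re, Complex.ofReal_im]
      ring
    rw [him, abs_mul]
    by_cases hv0 : ‖v‖ = 0
    · have hv : v = 0 := by
        rwa [norm_eq_zero] at hv0
      have h0 : (u * (starRingEnd ℂ) v).im = 0 := by rw [hv]; simp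
      rw [h0, abs_zero, mul_zero]
      positivity
    · have hv : 0 < ‖v‖ := lt_of_le_of_ne (norm_nonneg v) (Ne.symm hv0)
      have hF : |q - p| ≤ 6 * (‖u‖ - ‖v‖) / ‖v‖ := by
        rw [abs_sub_comm]
        exact aux_trunc a ha1 ha2 c hc (‖v‖) (‖u‖) hv hvu
      have hI : |(u * (starRingEnd ℂ) v).im| ≤ ‖u - v‖ * ‖v‖ :=
        aux_im_bound u v
      have hsub : ‖u‖ - ‖v‖ ≤ ‖u - v‖ := by
        have := abs_norm_sub_norm_le u v
        linarith [le_abs_self (‖u‖ - ‖v‖)]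
      calc |q - p| * |(u * (starRingEnd ℂ) v).im|
          ≤ (6 * (‖u‖ - ‖v‖) / ‖v‖)
            * (‖u - v‖ * ‖v‖) := by
            apply mul_le_mul hF hI (abs_nonneg _)
            exact div_nonneg (by linarith) hv.le
        _ = 6 * (‖u‖ - ‖v‖) * ‖u - v‖ := by
            field_simp
        _ ≤ 6 * ‖u - v‖ ^ 2 := by
            nlinarith [norm_nonneg (u - v)]
  intro u v
  rcases le_total (‖v‖) (‖u‖) with h | h
  · exact main u v h
  · have hsym : (an n u - an n v) * (starRingEnd ℂ) (u - v)
        = (an n v - an n u) * (starRingEnd ℂ) (v - u) := by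
      rw [map_sub, map_sub]; ring
    have habs : ‖u - v‖ = ‖v - u‖ := by
      exact norm_sub_rev u v
    rw [hsym, habs]
    exact main v u h
end

section
/- Define the real function a on [0,∞) by a(0) = 0, a(x) = −x·log(x²) for 0 < x ≤ e^{−3}, and a(x) = 3x + 4e^{−3} − e^{−6}/x for x ≥ e^{−3}; extend it to the complex plane by A(z) = (z/|z|)·a(|z|) for z ≠ 0 and A(0) = 0. For a positive integer n define a_n : ℂ → ℂ by a_n(z) = A(z) if |z| ≥ 1/n and a_n(z) = n·a(1/n)·z if |z| ≤ 1/n. Then for every integer n ≥ 21 (so that 1/n < e^{−3}) and every complex number z, |a_n(z) − A(z)| ≤ (4·log n)/n. -/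
lemma key_aux (n r : ℝ) (hn : 21 ≤ n) (hr : 0 < r) (hrn : r ≤ 1/n) :
    -(r * Real.log r) ≤ Real.log n / n := by
  have hn0 : (0:ℝ) < n := by linarith
  have hln : 1 ≤ Real.log n := by
    have h21 : Real.exp 1 ≤ n := by nlinarith [Real.exp_one_lt_d9]
    calc (1:ℝ) = Real.log (Real.exp 1) := (Real.log_exp 1).symm
    _ ≤ Real.log n := Real.log_le_log (Real.exp_pos 1) h21
  have hnr : 0 < n * r := by positivity
  have h1 : Real.log (1/(n*r)) ≤ 1/(n*r) - 1 := Real.log_le_sub_one_of_pos (by positivity)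
  rw [one_div, Real.log_inv, Real.log_mul (ne_of_gt hn0) (ne_of_gt hr)] at h1
  have h2 : r * (-(Real.log n + Real.log r)) ≤ r * ((n*r)⁻¹ - 1) :=
    mul_le_mul_of_nonneg_left h1 hr.le
  have h3 : r * (n*r)⁻¹ = 1/n := by field_simp
  have h4 : (0:ℝ) ≤ (1/n - r) * (Real.log n - 1) := mul_nonneg (by linarith) (by linarith)
  have h5 : Real.log n / n = (1/n) * Real.log n := by ring
  nlinarith [h2, h3, h4]

theorem truncated_a_error_estimate (a : ℝ → ℝ) (ha0 : a 0 = 0)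
    (ha1 : ∀ x : ℝ, 0 < x → x ≤ Real.exp (-3) → a x = -x * Real.log (x ^ 2))
    (ha2 : ∀ x : ℝ, Real.exp (-3) ≤ x → a x = 3 * x + 4 * Real.exp (-3) - Real.exp (-6) / x)
    (A : ℂ → ℂ) (hA0 : A 0 = 0)
    (hA : ∀ z : ℂ, z ≠ 0 → A z = (z / (‖z‖ : ℂ)) * (a (‖z‖) : ℂ))
    (an : ℕ → ℂ → ℂ)
    (han1 : ∀ (n : ℕ) (z : ℂ), 1 / (n : ℝ) ≤ ‖z‖ → an n z = A z)
    (han2 : ∀ (n : ℕ) (z : ℂ), ‖z‖ ≤ 1 / (n : ℝ) →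
      an n z = ((n : ℂ) * (a (1 / (n : ℝ)) : ℂ)) * z) :
    ∀ (n : ℕ), 21 ≤ n → ∀ z : ℂ,
      ‖an n z - A z‖ ≤ 4 * Real.log n / n := by
  intro n hn z
  have hnR : (21:ℝ) ≤ (n:ℝ) := by exact_mod_cast hn
  have hn0 : (0:ℝ) < n := by linarith
  have hln : 1 ≤ Real.log n := by
    have h21 : Real.exp 1 ≤ (n:ℝ) := by nlinarith [Real.exp_one_lt_d9]
    calc (1:ℝ) = Real.log (Real.exp 1) := (Real.log_exp 1).symm
    _ ≤ Real.log n := Real.log_le_log (Real.exp_pos 1) h21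
  have hrhs : (0:ℝ) ≤ 4 * Real.log n / n := by positivity
  -- 1/n ≤ exp(-3)
  have hexp3 : Real.exp 3 ≤ 21 := by
    have h : Real.exp 3 = Real.exp 1 * Real.exp 1 * Real.exp 1 := by
      rw [← Real.exp_add, ← Real.exp_add]; norm_num
    nlinarith [Real.exp_one_lt_d9, Real.exp_pos 1]
  have h1n_le : 1 / (n:ℝ) ≤ Real.exp (-3) := by
    rw [Real.exp_neg]
    rw [one_div, inv_le_inv₀ hn0 (Real.exp_pos 3)]
    linarith
  by_cases hcase : 1 / (n:ℝ) ≤ ‖z‖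
  · rw [han1 n z hcase]
    simpa using hrhs
  · push_neg at hcase
    rcases eq_or_ne z 0 with rfl | hz
    · rw [han2 n 0 (by simpa using (by positivity : (0:ℝ) ≤ 1/(n:ℝ))), hA0]
      simpa using hrhs
    · set r := ‖z‖ with hrdef
      have hr0 : 0 < r := norm_pos_iff.mpr hz
      have hinv : (0:ℝ) < 1 / n := by positivity
      have haval : a (1 / (n:ℝ)) = 2 * Real.log n / n := by
        rw [ha1 _ hinv h1n_le, Real.log_pow, one_div, Real.log_inv]
        push_cast
        ring
      have har : a r = -(2 * (r * Real.log r)) := by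
        rw [ha1 r hr0 (le_trans hcase.le h1n_le), Real.log_pow]
        push_cast
        ring
      have hexple1 : Real.exp (-3:ℝ) ≤ 1 := Real.exp_le_one_iff.mpr (by norm_num)
      have hlogr : Real.log r ≤ 0 := Real.log_nonpos hr0.le (by linarith)
      have hkey : -(r * Real.log r) ≤ Real.log n / n := key_aux n r hnR hr0 hcase.le
      rw [han2 n z hcase.le, hA z hz]
      have htri : ‖(((n:ℂ)) * (a (1/(n:ℝ)) : ℂ)) * z
            - z / (‖z‖ : ℂ) * (a (‖z‖) : ℂ)‖
          ≤ ‖(((n:ℂ)) * (a (1/(n:ℝ)) : ℂ)) * z‖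
            + ‖z / (‖z‖ : ℂ) * (a (‖z‖) : ℂ)‖ := by
        exact norm_sub_le _ _
      refine htri.trans ?_
      have e1 : ‖(((n:ℂ)) * (a (1/(n:ℝ)) : ℂ)) * z‖
          = (n:ℝ) * |a (1/(n:ℝ))| * r := by
        simp [norm_mul, Complex.norm_real, Complex.norm_natCast, hrdef]
      have e2 : ‖z / (‖z‖ : ℂ) * (a (‖z‖) : ℂ)‖
          = |a r| := by
        rw [norm_mul, norm_div, Complex.norm_real, Complex.norm_real, Real.norm_eq_abs, Real.norm_eq_abs]
        rw [abs_of_nonneg (norm_nonneg z)]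
        rw [← hrdef, div_self (ne_of_gt hr0), one_mul]
      rw [e1, e2, haval]
      have habs1 : |2 * Real.log n / (n:ℝ)| = 2 * Real.log n / n := by
        rw [abs_of_nonneg]; positivity
      have habs2 : |a r| = -(2 * (r * Real.log r)) := by
        rw [har, abs_of_nonneg]; nlinarith
      rw [habs1, habs2]
      have b1 : (n:ℝ) * (2 * Real.log n / n) * r ≤ 2 * Real.log n / n := by
        have : (n:ℝ) * (2 * Real.log n / n) * r = 2 * Real.log n * r := by
          field_simp
        rw [this]
        have : 2 * Real.log n * r ≤ 2 * Real.log n * (1/n) := by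
          apply mul_le_mul_of_nonneg_left hcase.le (by positivity)
        have heq : 2 * Real.log ↑n * (1/(n:ℝ)) = 2 * Real.log n / n := by ring
        linarith [this]
      have b2 : -(2 * (r * Real.log r)) ≤ 2 * Real.log n / n := by
        have heq2 : 2 * (Real.log ↑n / (n:ℝ)) = 2 * Real.log n / n := by ring
        linarith
      have : 2 * Real.log n / n + 2 * Real.log n / n = 4 * Real.log n / n := by ring
      linarith
end

section
/- Define the real function b on [0,∞) by b(x) = 0 for 0 ≤ x ≤ e^{−3} and b(x) = x·log(x²) + 3x + 4e^{−3} − e^{−6}/x for x ≥ e^{−3}; extend it to the complex plane by B(z) = (z/|z|)·b(|z|) for z ≠ 0 and B(0) = 0. For a positive integer n define b_n : ℂ → ℂ by b_n(z) = B(z) if |z| ≤ n and b_n(z) = (z/n)·b(n) if |z| ≥ n. Then there exists a constant C > 0, independent of n, such that for every integer n ≥ 2 and every complex number z with |z| ≥ n, |b_n(z) − B(z)| ≤ C·|z|·log(|z|²). -/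
theorem truncated_b_error_estimate (b : ℝ → ℝ)
    (hb1 : ∀ x : ℝ, 0 ≤ x → x ≤ Real.exp (-3) → b x = 0)
    (hb2 : ∀ x : ℝ, Real.exp (-3) ≤ x →
      b x = x * Real.log (x ^ 2) + 3 * x + 4 * Real.exp (-3) - Real.exp (-6) / x)
    (B : ℂ → ℂ) (hB0 : B 0 = 0)
    (hB : ∀ z : ℂ, z ≠ 0 → B z = (z / (‖z‖ : ℂ)) * (b ‖z‖ : ℂ))
    (bn : ℕ → ℂ → ℂ)
    (hbn1 : ∀ (n : ℕ) (z : ℂ), ‖z‖ ≤ (n : ℝ) → bn n z = B z)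
    (hbn2 : ∀ (n : ℕ) (z : ℂ), (n : ℝ) ≤ ‖z‖ →
      bn n z = (z / (n : ℂ)) * (b (n : ℝ) : ℂ)) :
    ∃ C : ℝ, 0 < C ∧ ∀ (n : ℕ), 2 ≤ n → ∀ z : ℂ, (n : ℝ) ≤ ‖z‖ →
      ‖bn n z - B z‖ ≤ C * ‖z‖ * Real.log (‖z‖ ^ 2) := by
  have he3 : Real.exp (-3) ≤ 1 := by
    have := Real.exp_le_exp.mpr (show (-3:ℝ) ≤ 0 by norm_num)
    simpa using this
  have he6 : Real.exp (-6) ≤ 1 := by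
    have := Real.exp_le_exp.mpr (show (-6:ℝ) ≤ 0 by norm_num)
    simpa using this
  have he3p : (0:ℝ) < Real.exp (-3) := Real.exp_pos _
  have he6p : (0:ℝ) < Real.exp (-6) := Real.exp_pos _
  -- key pointwise bounds on b
  have key : ∀ x : ℝ, 2 ≤ x → 0 ≤ b x ∧ b x ≤ 6 * x * Real.log (x ^ 2) := by
    intro x hx
    have hx0 : (0:ℝ) < x := by linarith
    have hbx := hb2 x (by linarith)
    have hlog1 : 1 ≤ Real.log (x ^ 2) := by
      rw [Real.log_pow]
      have h1 : Real.log 2 ≤ Real.log x := Real.log_le_log (by norm_num) hx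
      have h2 := Real.log_two_gt_d9
      push_cast
      nlinarith
    have hdiv : Real.exp (-6) / x ≤ 1 := by
      rw [div_le_one hx0]; linarith
    have hdiv0 : 0 ≤ Real.exp (-6) / x := by positivity
    constructor
    · rw [hbx]
      nlinarith [mul_le_mul_of_nonneg_left hlog1 hx0.le]
    · rw [hbx]
      nlinarith [mul_le_mul_of_nonneg_left hlog1 hx0.le]
  refine ⟨12, by norm_num, ?_⟩
  intro n hn z hz
  have hn2 : (2:ℝ) ≤ (n:ℝ) := by exact_mod_cast hn
  set r := ‖z‖ with hrdef
  have hr : (2:ℝ) ≤ r := le_trans hn2 hz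
  have hr0 : (0:ℝ) < r := by linarith
  have hz0 : z ≠ 0 := by
    intro h
    rw [h, norm_zero] at hrdef
    rw [hrdef] at hr0
    exact lt_irrefl 0 hr0
  have hn0 : (0:ℝ) < (n:ℝ) := by linarith
  obtain ⟨hbn_nonneg, hbn_le⟩ := key (n:ℝ) hn2
  obtain ⟨hbr_nonneg, hbr_le⟩ := key r hr
  have hlogmono : Real.log ((n:ℝ) ^ 2) ≤ Real.log (r ^ 2) := by
    apply Real.log_le_log (by positivity)
    nlinarith
  rw [hbn2 n z hz, hB z hz0]
  have htri : ‖(z / (n : ℂ)) * (b (n:ℝ) : ℂ) - (z / (r : ℂ)) * (b r : ℂ)‖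
      ≤ ‖(z / (n : ℂ)) * (b (n:ℝ) : ℂ)‖ + ‖(z / (r : ℂ)) * (b r : ℂ)‖ := by
    simpa [sub_eq_add_neg] using norm_add_le ((z / (n : ℂ)) * (b (n:ℝ) : ℂ)) (-((z / (r : ℂ)) * (b r : ℂ)))
  have h1 : ‖(z / (n : ℂ)) * (b (n:ℝ) : ℂ)‖ = r / (n:ℝ) * b (n:ℝ) := by
    rw [norm_mul, norm_div]
    simp [← hrdef, abs_of_nonneg hbn_nonneg, abs_of_nonneg hn0.le]
  have h2 : ‖(z / (r : ℂ)) * (b r : ℂ)‖ = b r := by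
    rw [norm_mul, norm_div]
    simp [← hrdef, abs_of_nonneg hbr_nonneg, abs_of_nonneg hr0.le]
    field_simp
  rw [h1, h2] at htri
  have hA : r / (n:ℝ) * b (n:ℝ) ≤ 6 * r * Real.log (r ^ 2) := by
    have : r / (n:ℝ) * b (n:ℝ) ≤ r / (n:ℝ) * (6 * (n:ℝ) * Real.log ((n:ℝ) ^ 2)) := by
      apply mul_le_mul_of_nonneg_left hbn_le (by positivity)
    have heq : r / (n:ℝ) * (6 * (n:ℝ) * Real.log ((n:ℝ) ^ 2)) = 6 * r * Real.log ((n:ℝ) ^ 2) := by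
      field_simp
    rw [heq] at this
    have : 6 * r * Real.log ((n:ℝ) ^ 2) ≤ 6 * r * Real.log (r ^ 2) := by
      apply mul_le_mul_of_nonneg_left hlogmono (by positivity)
    linarith
  have hBb : b r ≤ 6 * r * Real.log (r ^ 2) := hbr_le
  linarith
end

section
/- Let T > 0, let a ≥ 0, b ≥ 0, and let 0 < δ ≤ 1. Suppose y : [0, T] → ℝ is continuous and nonnegative, y(0) = 0, and y(t) ≤ ∫₀ᵗ (a + b·y(s)^{1−δ}) ds for all t ∈ [0, T]. Then y(t) ≤ ((a·t)^δ + δ·b·t)^{1/δ} for all t ∈ [0, T]. -/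
open intervalIntegral

theorem nonlinear_gronwall (T a b δ : ℝ) (hT : 0 < T) (ha : 0 ≤ a) (hb : 0 ≤ b)
    (hδ0 : 0 < δ) (hδ1 : δ ≤ 1) (y : ℝ → ℝ)
    (hy_cont : ContinuousOn y (Set.Icc 0 T))
    (hy_nonneg : ∀ t ∈ Set.Icc (0 : ℝ) T, 0 ≤ y t)
    (hy0 : y 0 = 0)
    (hy : ∀ t ∈ Set.Icc (0 : ℝ) T, y t ≤ ∫ s in (0 : ℝ)..t, (a + b * y s ^ (1 - δ))) :
    ∀ t ∈ Set.Icc (0 : ℝ) T, y t ≤ ((a * t) ^ δ + δ * b * t) ^ (1 / δ) := by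
  set g : ℝ → ℝ := fun s => a + b * y s ^ (1 - δ) with hg_def
  have hg_cont : ContinuousOn g (Set.Icc 0 T) := by
    apply continuousOn_const.add
    apply continuousOn_const.mul
    exact hy_cont.rpow_const (fun x _ => Or.inr (by linarith))
  set F : ℝ → ℝ := fun t => ∫ s in (0:ℝ)..t, g s with hF_def
  -- integrability on subintervals
  have hint : ∀ t ∈ Set.Icc (0:ℝ) T, IntervalIntegrable g MeasureTheory.volume 0 t := by
    intro t ht
    apply ContinuousOn.intervalIntegrable
    apply hg_cont.mono
    rw [Set.uIcc_of_le ht.1]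
    exact Set.Icc_subset_Icc le_rfl ht.2
  -- F is continuous on [0,T]
  have hF_cont : ContinuousOn F (Set.Icc 0 T) := by
    have : Set.Icc (0:ℝ) T = Set.uIcc 0 T := (Set.uIcc_of_le hT.le).symm
    rw [this]
    apply intervalIntegral.continuousOn_primitive_interval
    rw [← this]
    exact hg_cont.integrableOn_Icc
  -- F has derivative g t at interior points
  have hF_deriv : ∀ t ∈ Set.Ioo (0:ℝ) T, HasDerivAt F (g t) t := by
    intro t ht
    have hmem : Set.Icc (0:ℝ) T ∈ nhds t := Icc_mem_nhds ht.1 ht.2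
    refine integral_hasDerivAt_right (hint t ⟨ht.1.le, ht.2.le⟩) ?_ (hg_cont.continuousAt hmem)
    exact ContinuousOn.stronglyMeasurableAtFilter isOpen_Ioo (hg_cont.mono Set.Ioo_subset_Icc_self)
      t ht
  -- g ≥ a pointwise on [0,T]
  have hg_ge : ∀ s ∈ Set.Icc (0:ℝ) T, a ≤ g s := by
    intro s hs
    have : 0 ≤ b * y s ^ (1 - δ) :=
      mul_nonneg hb (Real.rpow_nonneg (hy_nonneg s hs) _)
    simp only [hg_def]; linarith
  -- F t ≥ a * t
  have hF_ge : ∀ t ∈ Set.Icc (0:ℝ) T, a * t ≤ F t := by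
    intro t ht
    have h1 : (∫ s in (0:ℝ)..t, a) ≤ F t := by
      apply intervalIntegral.integral_mono_on ht.1 (intervalIntegrable_const) (hint t ht)
      intro s hs
      exact hg_ge s ⟨hs.1, hs.2.trans ht.2⟩
    rwa [intervalIntegral.integral_const, smul_eq_mul, sub_zero, mul_comm] at h1
  have hF_nonneg : ∀ t ∈ Set.Icc (0:ℝ) T, 0 ≤ F t := by
    intro t ht
    exact le_trans (mul_nonneg ha ht.1) (hF_ge t ht)
  have hyF : ∀ t ∈ Set.Icc (0:ℝ) T, y t ≤ F t := hy
  -- key: for each η > 0 and t ∈ [0,T], (F t + η)^δ ≤ η^δ + (a t)^δ + δ b t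
  have key : ∀ η > (0:ℝ), ∀ t ∈ Set.Icc (0:ℝ) T,
      (F t + η) ^ δ ≤ η ^ δ + ((a * t) ^ δ + δ * b * t) := by
    intro η hη t ht
    set φ : ℝ → ℝ := fun t => η ^ δ + ((a * t) ^ δ + δ * b * t) - (F t + η) ^ δ with hφ_def
    -- derivative facts on Ioo
    have hA_deriv : ∀ s ∈ Set.Ioo (0:ℝ) T,
        HasDerivAt (fun u => (a * u) ^ δ) (δ * a * (a * s) ^ (δ - 1)) s := by
      intro s hs
      rcases eq_or_lt_of_le ha with h0 | hpos
      · have : (fun u : ℝ => (a * u) ^ δ) = fun _ => (0:ℝ) := by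
          funext u; rw [← h0, zero_mul, Real.zero_rpow hδ0.ne']
        rw [this, ← h0]
        simpa using hasDerivAt_const s (0:ℝ)
      · have h1 : HasDerivAt (fun u : ℝ => a * u) a s := by
          simpa using (hasDerivAt_id s).const_mul a
        have := h1.rpow_const (p := δ) (Or.inl (mul_pos hpos hs.1).ne')
        convert this using 1; ring
    have hφ_deriv : ∀ s ∈ Set.Ioo (0:ℝ) T,
        HasDerivAt φ ((δ * a * (a * s) ^ (δ - 1) + δ * b)
          - g s * δ * (F s + η) ^ (δ - 1)) s := by
      intro s hs
      have hFs : HasDerivAt (fun u => F u + η) (g s) s := (hF_deriv s hs).add_const η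
      have hFpos : 0 < F s + η :=
        lt_of_lt_of_le hη (le_add_of_nonneg_left (hF_nonneg s ⟨hs.1.le, hs.2.le⟩))
      have h2 : HasDerivAt (fun u => (F u + η) ^ δ) (g s * δ * (F s + η) ^ (δ - 1)) s :=
        hFs.rpow_const (Or.inl hFpos.ne')
      have h3 : HasDerivAt (fun u => η ^ δ + ((a * u) ^ δ + δ * b * u))
          (δ * a * (a * s) ^ (δ - 1) + δ * b) s := by
        have hb' : HasDerivAt (fun u : ℝ => δ * b * u) (δ * b) s := by
          simpa using (hasDerivAt_id s).const_mul (δ * b)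
        have := (hasDerivAt_const s (η ^ δ)).add ((hA_deriv s hs).add hb')
        rw [zero_add] at this
        exact this
      exact h3.sub h2
    -- derivative nonneg
    have hφ_deriv_nonneg : ∀ s ∈ Set.Ioo (0:ℝ) T,
        0 ≤ (δ * a * (a * s) ^ (δ - 1) + δ * b) - g s * δ * (F s + η) ^ (δ - 1) := by
      intro s hs
      have hsIcc : s ∈ Set.Icc (0:ℝ) T := ⟨hs.1.le, hs.2.le⟩
      have hFpos : 0 < F s + η :=
        lt_of_lt_of_le hη (le_add_of_nonneg_left (hF_nonneg s hsIcc))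
      have hys : 0 ≤ y s := hy_nonneg s hsIcc
      have hyFs : y s ≤ F s + η := (hyF s hsIcc).trans (by linarith)
      -- b-part: y s ^ (1-δ) * (F s + η)^(δ-1) ≤ 1
      have hb_part : y s ^ (1 - δ) * (F s + η) ^ (δ - 1) ≤ 1 := by
        have h1 : y s ^ (1 - δ) ≤ (F s + η) ^ (1 - δ) :=
          Real.rpow_le_rpow hys hyFs (by linarith)
        have h2 : (0:ℝ) ≤ (F s + η) ^ (δ - 1) := Real.rpow_nonneg hFpos.le _
        calc y s ^ (1 - δ) * (F s + η) ^ (δ - 1)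
            ≤ (F s + η) ^ (1 - δ) * (F s + η) ^ (δ - 1) := by
              exact mul_le_mul_of_nonneg_right h1 h2
          _ = 1 := by
              rw [← Real.rpow_add hFpos]; norm_num
      -- a-part
      have ha_part : a * (F s + η) ^ (δ - 1) ≤ a * (a * s) ^ (δ - 1) := by
        rcases eq_or_lt_of_le ha with h0 | hpos
        · rw [← h0]; simp
        · have haspos : 0 < a * s := mul_pos hpos hs.1
          have hle : a * s ≤ F s + η := (hF_ge s hsIcc).trans (by linarith)
          exact mul_le_mul_of_nonneg_left
            (Real.rpow_le_rpow_of_nonpos haspos hle (by linarith)) ha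
      have : g s * (F s + η) ^ (δ - 1) ≤ a * (a * s) ^ (δ - 1) + b := by
        have expand : g s * (F s + η) ^ (δ - 1)
            = a * (F s + η) ^ (δ - 1) + b * (y s ^ (1 - δ) * (F s + η) ^ (δ - 1)) := by
          simp only [hg_def]; ring
        rw [expand]
        have : b * (y s ^ (1 - δ) * (F s + η) ^ (δ - 1)) ≤ b * 1 :=
          mul_le_mul_of_nonneg_left hb_part hb
        linarith
      nlinarith [this, hδ0.le]
    -- φ monotone on [0,T]
    have hφ_cont : ContinuousOn φ (Set.Icc 0 T) := by
      apply ContinuousOn.sub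
      · apply continuousOn_const.add
        apply ContinuousOn.add
        · exact (ContinuousOn.rpow_const (continuousOn_const.mul continuousOn_id)
            (fun x _ => Or.inr hδ0.le))
        · exact (continuousOn_const.mul continuousOn_id)
      · exact (hF_cont.add continuousOn_const).rpow_const (fun x _ => Or.inr hδ0.le)
    have hmono : MonotoneOn φ (Set.Icc 0 T) := by
      apply monotoneOn_of_deriv_nonneg (convex_Icc 0 T) hφ_cont
      · intro s hs
        rw [interior_Icc] at hs
        exact (hφ_deriv s hs).differentiableAt.differentiableWithinAt
      · intro s hs
        rw [interior_Icc] at hs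
        rw [(hφ_deriv s hs).deriv]
        exact hφ_deriv_nonneg s hs
    have h0T : (0:ℝ) ∈ Set.Icc (0:ℝ) T := Set.left_mem_Icc.2 hT.le
    have := hmono h0T ht ht.1
    have hφ0 : φ 0 = 0 := by
      simp only [hφ_def, hF_def]
      rw [intervalIntegral.integral_same, mul_zero, mul_zero,
        Real.zero_rpow hδ0.ne', zero_add]
      ring
    rw [hφ0] at this
    simp only [hφ_def] at this
    linarith
  -- conclude
  intro t ht
  have hFt : 0 ≤ F t := hF_nonneg t ht
  have hFδ : F t ^ δ ≤ (a * t) ^ δ + δ * b * t := by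
    apply le_of_forall_pos_le_add
    intro ε hε
    have hη : (0:ℝ) < ε ^ (1 / δ) := Real.rpow_pos_of_pos hε _
    have h1 := key (ε ^ (1 / δ)) hη t ht
    have h2 : F t ^ δ ≤ (F t + ε ^ (1 / δ)) ^ δ :=
      Real.rpow_le_rpow hFt (by linarith) hδ0.le
    have h3 : (ε ^ (1 / δ)) ^ δ = ε := by
      rw [one_div, Real.rpow_inv_rpow hε.le hδ0.ne']
    linarith
  have hfinal : F t ≤ ((a * t) ^ δ + δ * b * t) ^ (1 / δ) := by
    have := Real.rpow_le_rpow (Real.rpow_nonneg hFt δ) hFδ (by positivity : (0:ℝ) ≤ 1 / δ)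
    rwa [one_div, Real.rpow_rpow_inv hFt hδ0.ne', ← one_div] at this
  exact (hyF t ht).trans hfinal
end
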